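/- Suppose there exist ρ* < 1/2 and a* < 1 such that P_X-almost everywhere on {η ≠ 1/2} one has ρ₀(x) + ρ₁(x) ≤ 2ρ* and [ρ₁(x) − ρ₀(x)]/[{2η(x)−1}{1 − ρ₀(x) − ρ₁(x)}] ≤ a*. Then for any classifier C, R(C) − R(C^Bayes) ≤ {R̃(C) − R̃(C̃^Bayes)}/{(1−2ρ*)(1−a*)}. -/

import Mathlib

open MeasureTheory


lemma risk_eq {Ω 𝒳 : Type*} [MeasurableSpace Ω] [MeasurableSpace 𝒳]
    (μ : Measure Ω) [IsProbabilityMeasure μ]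
    (X : Ω → 𝒳) (Y : Ω → Bool) (hX : Measurable X) (hY : Measurable Y)
    (η : 𝒳 → ℝ) (hηm : Measurable η) (hηb : ∀ x, η x ∈ Set.Icc (0:ℝ) 1)
    (hη : ∀ A : Set 𝒳, MeasurableSet A →
      ∫ x in A, η x ∂(Measure.map X μ) = (μ (X ⁻¹' A ∩ {ω | Y ω = true})).toReal)
    (D : 𝒳 → Bool) (hD : Measurable D) :
    (μ {ω | D (X ω) ≠ Y ω}).toReal
      = ∫ x, (if D x then 1 - η x else η x) ∂(Measure.map X μ) := by
  set ν := Measure.map X μ with hν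
  haveI : IsProbabilityMeasure ν := Measure.isProbabilityMeasure_map hX.aemeasurable
  have hintη : Integrable η ν := by
    refine (integrable_const (1:ℝ)).mono' hηm.aestronglyMeasurable ?_
    filter_upwards with x
    rw [Real.norm_eq_abs, abs_le]
    exact ⟨by linarith [(hηb x).1], (hηb x).2⟩
  have hA : MeasurableSet (D ⁻¹' {true}) := hD (measurableSet_singleton _)
  set A := D ⁻¹' {true} with hAdef
  have hYt : MeasurableSet {ω | Y ω = true} := hY (measurableSet_singleton _)
  have hYf : MeasurableSet {ω | Y ω = false} := hY (measurableSet_singleton _)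
  have hset : {ω | D (X ω) ≠ Y ω}
      = (X ⁻¹' A ∩ {ω | Y ω = false}) ∪ (X ⁻¹' Aᶜ ∩ {ω | Y ω = true}) := by
    ext ω
    simp only [Set.mem_setOf_eq, Set.mem_union, Set.mem_inter_iff, Set.mem_preimage,
      Set.mem_compl_iff, Set.mem_singleton_iff, hAdef]
    cases hD1 : D (X ω) <;> cases hY1 : Y ω <;> simp
  have hdisj : Disjoint (X ⁻¹' A ∩ {ω | Y ω = false}) (X ⁻¹' Aᶜ ∩ {ω | Y ω = true}) := by
    rw [Set.disjoint_left]
    rintro ω ⟨-, h1⟩ ⟨-, h2⟩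
    simp only [Set.mem_setOf_eq] at h1 h2
    rw [h1] at h2; simp at h2
  have hm2 : MeasurableSet (X ⁻¹' Aᶜ ∩ {ω | Y ω = true}) := (hX hA.compl).inter hYt
  have hmeq : μ {ω | D (X ω) ≠ Y ω}
      = μ (X ⁻¹' A ∩ {ω | Y ω = false}) + μ (X ⁻¹' Aᶜ ∩ {ω | Y ω = true}) := by
    rw [hset]; exact measure_union hdisj hm2
  have hsplit : μ (X ⁻¹' A)
      = μ (X ⁻¹' A ∩ {ω | Y ω = true}) + μ (X ⁻¹' A ∩ {ω | Y ω = false}) := by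
    have : X ⁻¹' A = (X ⁻¹' A ∩ {ω | Y ω = true}) ∪ (X ⁻¹' A ∩ {ω | Y ω = false}) := by
      ext ω
      simp only [Set.mem_inter_iff, Set.mem_setOf_eq, Set.mem_union]
      cases hY1 : Y ω <;> simp
    conv_lhs => rw [this]
    refine measure_union ?_ ((hX hA).inter hYf)
    rw [Set.disjoint_left]
    rintro ω ⟨-, h1⟩ ⟨-, h2⟩
    simp only [Set.mem_setOf_eq] at h1 h2
    rw [h1] at h2; simp at h2
  have hfin : ∀ s : Set Ω, μ s ≠ ⊤ := fun s => measure_ne_top μ s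
  have hmap : μ (X ⁻¹' A) = ν A := (Measure.map_apply hX hA).symm
  have hfalse : (μ (X ⁻¹' A ∩ {ω | Y ω = false})).toReal
      = (ν A).toReal - ∫ x in A, η x ∂ν := by
    have := congrArg ENNReal.toReal hsplit
    rw [ENNReal.toReal_add (hfin _) (hfin _), hmap] at this
    rw [hη A hA]
    linarith [this]
  have htrue : (μ (X ⁻¹' Aᶜ ∩ {ω | Y ω = true})).toReal = ∫ x in Aᶜ, η x ∂ν :=
    (hη Aᶜ hA.compl).symm
  have hLHS : (μ {ω | D (X ω) ≠ Y ω}).toReal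
      = ((ν A).toReal - ∫ x in A, η x ∂ν) + ∫ x in Aᶜ, η x ∂ν := by
    rw [hmeq, ENNReal.toReal_add (hfin _) (hfin _), hfalse, htrue]
  rw [hLHS]
  have hintf : Integrable (fun x => if D x then 1 - η x else η x) ν := by
    refine (integrable_const (1:ℝ)).mono' ?_ ?_
    · exact (Measurable.ite hA ((measurable_const.sub hηm)) hηm).aestronglyMeasurable
    · filter_upwards with x
      rw [Real.norm_eq_abs, abs_le]
      rcases hηb x with ⟨h0, h1⟩
      by_cases hx : D x <;> simp [hx] <;> constructor <;> linarith
  rw [← integral_add_compl hA hintf]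
  have h1 : ∫ x in A, (if D x then 1 - η x else η x) ∂ν = ∫ x in A, (1 - η x) ∂ν := by
    refine setIntegral_congr_fun hA fun x hx => ?_
    simp only [hAdef, Set.mem_preimage, Set.mem_singleton_iff] at hx
    simp [hx]
  have h2 : ∫ x in Aᶜ, (if D x then 1 - η x else η x) ∂ν = ∫ x in Aᶜ, η x ∂ν := by
    refine setIntegral_congr_fun hA.compl fun x hx => ?_
    simp only [hAdef, Set.mem_compl_iff, Set.mem_preimage, Set.mem_singleton_iff] at hx
    simp [hx]
  rw [h1, h2]
  have h3 : ∫ x in A, (1 - η x) ∂ν = (ν A).toReal - ∫ x in A, η x ∂ν := by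
    rw [integral_sub (integrable_const 1) (hintη.restrict)]
    simp [setIntegral_const]
    rfl
  rw [h3]

/-- Pointwise comparison of excess losses. -/
lemma pointwise_key (e et r0 r1 ρs as : ℝ)
    (hηb : e ∈ Set.Icc (0:ℝ) 1)
    (hform : et = e * (1 - r1) + (1 - e) * r0)
    (hρs : ρs < 1/2) (has : as < 1)
    (hx : e ≠ 1/2 → r0 + r1 ≤ 2 * ρs ∧ (r1 - r0) / ((2 * e - 1) * (1 - r0 - r1)) ≤ as)
    (cx cbx ctbx : Bool)
    (hcb : cbx = if (1/2 : ℝ) ≤ e then true else false)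
    (hctb : ctbx = if (1/2 : ℝ) ≤ et then true else false) :
    ((if cx then 1 - e else e) - (if cbx then 1 - e else e))
      ≤ ((if cx then 1 - et else et) - (if ctbx then 1 - et else et))
          / ((1 - 2 * ρs) * (1 - as)) := by
  have hκ : 0 < (1 - 2 * ρs) * (1 - as) := mul_pos (by linarith) (by linarith)
  rw [le_div_iff₀ hκ]
  by_cases hhalf : e = 1/2
  · -- LHS is zero, RHS nonneg
    have hcb' : cbx = true := by rw [hcb, if_pos]; rw [hhalf]
    have hL : ((if cx then 1 - e else e) - (if cbx then 1 - e else e)) = 0 := by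
      rw [hcb']
      by_cases hc : cx <;> simp [hc, hhalf] <;> norm_num
    rw [hL, zero_mul]
    by_cases ht : (1/2 : ℝ) ≤ et
    · have : ctbx = true := by rw [hctb, if_pos ht]
      rw [this]
      by_cases hc : cx <;> simp [hc] <;> linarith
    · have : ctbx = false := by rw [hctb, if_neg ht]
      rw [this]
      by_cases hc : cx <;> simp [hc] <;> linarith
  · obtain ⟨h1, h2⟩ := hx hhalf
    have hs : 0 < 1 - r0 - r1 := by linarith
    by_cases he : (1/2 : ℝ) ≤ e
    · have hegt : 1/2 < e := lt_of_le_of_ne he (Ne.symm hhalf)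
      have hepos : 0 < 2 * e - 1 := by linarith
      have hcb' : cbx = true := by rw [hcb, if_pos he]
      have hprod : 0 < (2 * e - 1) * (1 - r0 - r1) := mul_pos hepos hs
      have h2' : r1 - r0 ≤ as * ((2 * e - 1) * (1 - r0 - r1)) :=
        (div_le_iff₀ hprod).mp h2
      have hkey : (2 * e - 1) * ((1 - 2 * ρs) * (1 - as)) ≤ 2 * et - 1 := by
        have het : 2 * et - 1 = (2 * e - 1) * (1 - r0 - r1) - (r1 - r0) := by
          rw [hform]; ring
        rw [het]
        nlinarith [mul_pos hepos hs, mul_nonneg hepos.le (by linarith : (0:ℝ) ≤ 1 - r0 - r1 - (1 - 2*ρs))]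
      have hetpos : (1/2 : ℝ) ≤ et := by nlinarith
      have hctb' : ctbx = true := by rw [hctb, if_pos hetpos]
      rw [hcb', hctb']
      by_cases hc : cx
      · simp [hc]
      · simp [hc]; nlinarith
    · have helt : e < 1/2 := lt_of_not_ge he
      have heneg : 2 * e - 1 < 0 := by linarith
      have hcb' : cbx = false := by rw [hcb, if_neg he]
      have hprod : (2 * e - 1) * (1 - r0 - r1) < 0 := mul_neg_of_neg_of_pos heneg hs
      have h2' : as * ((2 * e - 1) * (1 - r0 - r1)) ≤ r1 - r0 := by
        have := (div_le_iff_of_neg hprod).mp h2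
        linarith [this]
      have hkey : 2 * et - 1 ≤ (2 * e - 1) * ((1 - 2 * ρs) * (1 - as)) := by
        have het : 2 * et - 1 = (2 * e - 1) * (1 - r0 - r1) - (r1 - r0) := by
          rw [hform]; ring
        rw [het]
        nlinarith [mul_nonneg (by linarith : (0:ℝ) ≤ 1 - 2*e) (by linarith : (0:ℝ) ≤ 1 - r0 - r1 - (1 - 2*ρs))]
      have hetneg : ¬ ((1/2 : ℝ) ≤ et) := by
        intro hcon
        nlinarith
      have hctb' : ctbx = false := by rw [hctb, if_neg hetneg]
      rw [hcb', hctb']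
      by_cases hc : cx
      · simp [hc]; nlinarith
      · simp [hc]
/-- If there exist `ρ* < 1/2` and `a* < 1` such that, P_X-a.e. on `{η ≠ 1/2}`,
`ρ₀ + ρ₁ ≤ 2ρ*` and `(ρ₁ − ρ₀)/((2η−1)(1−ρ₀−ρ₁)) ≤ a*`, then for any classifier `C`,
`R(C) − R(C^Bayes) ≤ (R̃(C) − R̃(C̃^Bayes)) / ((1−2ρ*)(1−a*))`. -/
theorem stmt8 {Ω 𝒳 : Type*} [MeasurableSpace Ω] [MeasurableSpace 𝒳]
    (μ : Measure Ω) [IsProbabilityMeasure μ]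
    (X : Ω → 𝒳) (Y Yt : Ω → Bool)
    (hX : Measurable X) (hY : Measurable Y) (hYt : Measurable Yt)
    (η ηt ρ0 ρ1 : 𝒳 → ℝ)
    (hηm : Measurable η) (hηtm : Measurable ηt)
    (hρ0m : Measurable ρ0) (hρ1m : Measurable ρ1)
    (hηb : ∀ x, η x ∈ Set.Icc (0:ℝ) 1)
    (hρ0b : ∀ x, ρ0 x ∈ Set.Icc (0:ℝ) 1) (hρ1b : ∀ x, ρ1 x ∈ Set.Icc (0:ℝ) 1)
    (hη : ∀ A : Set 𝒳, MeasurableSet A →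
      ∫ x in A, η x ∂(Measure.map X μ) = (μ (X ⁻¹' A ∩ {ω | Y ω = true})).toReal)
    (hηt : ∀ A : Set 𝒳, MeasurableSet A →
      ∫ x in A, ηt x ∂(Measure.map X μ) = (μ (X ⁻¹' A ∩ {ω | Yt ω = true})).toReal)
    -- the corrupted regression function identity
    (hform : ∀ x, ηt x = η x * (1 - ρ1 x) + (1 - η x) * ρ0 x)
    (ρs as : ℝ) (hρs0 : 0 ≤ ρs) (hρs : ρs < 1/2) (has : as < 1)
    (hnoise : ∀ᵐ x ∂(Measure.map X μ), η x ≠ 1/2 →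
      ρ0 x + ρ1 x ≤ 2 * ρs ∧
      (ρ1 x - ρ0 x) / ((2 * η x - 1) * (1 - ρ0 x - ρ1 x)) ≤ as)
    (CBayes CtBayes : 𝒳 → Bool)
    (hCBayes : ∀ x, CBayes x = if (1/2 : ℝ) ≤ η x then true else false)
    (hCtBayes : ∀ x, CtBayes x = if (1/2 : ℝ) ≤ ηt x then true else false)
    (C : 𝒳 → Bool) (hC : Measurable C) :
    (μ {ω | C (X ω) ≠ Y ω}).toReal - (μ {ω | CBayes (X ω) ≠ Y ω}).toReal
      ≤ ((μ {ω | C (X ω) ≠ Yt ω}).toReal - (μ {ω | CtBayes (X ω) ≠ Yt ω}).toReal)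
          / ((1 - 2 * ρs) * (1 - as)) := by
  set ν := Measure.map X μ with hν
  haveI : IsProbabilityMeasure ν := Measure.isProbabilityMeasure_map hX.aemeasurable
  have hκ : 0 < (1 - 2 * ρs) * (1 - as) := mul_pos (by linarith) (by linarith)
  -- bounds on ηt
  have hηtb : ∀ x, ηt x ∈ Set.Icc (0:ℝ) 1 := by
    intro x
    rcases hηb x with ⟨a0, a1⟩; rcases hρ0b x with ⟨b0, b1⟩; rcases hρ1b x with ⟨c0, c1⟩
    constructor
    · rw [hform x]; nlinarith
    · rw [hform x]; nlinarith
  -- measurability of the Bayes classifiers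
  have hCBm : Measurable CBayes := by
    have : CBayes = fun x => if (1/2 : ℝ) ≤ η x then true else false := funext hCBayes
    rw [this]
    exact Measurable.ite (measurableSet_le measurable_const hηm) measurable_const
      measurable_const
  have hCtBm : Measurable CtBayes := by
    have : CtBayes = fun x => if (1/2 : ℝ) ≤ ηt x then true else false := funext hCtBayes
    rw [this]
    exact Measurable.ite (measurableSet_le measurable_const hηtm) measurable_const
      measurable_const
  -- risk identities
  have R1 := risk_eq μ X Y hX hY η hηm hηb hη C hC
  have R2 := risk_eq μ X Y hX hY η hηm hηb hη CBayes hCBm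
  have R3 := risk_eq μ X Yt hX hYt ηt hηtm hηtb hηt C hC
  have R4 := risk_eq μ X Yt hX hYt ηt hηtm hηtb hηt CtBayes hCtBm
  rw [R1, R2, R3, R4]
  -- integrability
  have hint : ∀ (f : 𝒳 → ℝ), Measurable f → (∀ x, f x ∈ Set.Icc (0:ℝ) 1) →
      ∀ D : 𝒳 → Bool, Measurable D →
      Integrable (fun x => if D x then 1 - f x else f x) ν := by
    intro f hf hfb D hD
    refine (integrable_const (1:ℝ)).mono' ?_ ?_
    · exact (Measurable.ite (hD (measurableSet_singleton true))
        (measurable_const.sub hf) hf).aestronglyMeasurable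
    · filter_upwards with x
      rw [Real.norm_eq_abs, abs_le]
      rcases hfb x with ⟨h0, h1⟩
      by_cases hx : D x <;> simp [hx] <;> constructor <;> linarith
  have i1 := hint η hηm hηb C hC
  have i2 := hint η hηm hηb CBayes hCBm
  have i3 := hint ηt hηtm hηtb C hC
  have i4 := hint ηt hηtm hηtb CtBayes hCtBm
  rw [← integral_sub i1 i2, ← integral_sub i3 i4, div_eq_mul_inv, ← integral_mul_const]
  refine integral_mono_ae (i1.sub i2) ((i3.sub i4).mul_const _) ?_
  filter_upwards [hnoise] with x hx
  have := pointwise_key (η x) (ηt x) (ρ0 x) (ρ1 x) ρs as (hηb x) (hform x) hρs has hx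
    (C x) (CBayes x) (CtBayes x) (hCBayes x) (hCtBayes x)
  rw [div_eq_mul_inv] at this
  exact this
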